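/- arXiv:1505.05912 — 4 statements merged into one kernel-verified Lean document; each statement's English description precedes it below -/
import Mathlib

section
/- Let p be a prime and L, N integers with 0 < L+1 < L+N < p, and let A(L,N) = {n! mod p : L+1 ≤ n ≤ L+N}. Then the cardinality of A(L,N) is at least N^{1/2}, i.e. |A(L,N)|² ≥ N. -/
theorem factorial_card_lower_bound (p : ℕ) [Fact p.Prime] (L N : ℕ)
    (h1 : L + 1 < L + N) (h2 : L + N < p) :
    N ≤ (((Finset.Icc (L + 1) (L + N)).image
      (fun n => (Nat.factorial n : ZMod p))).card) ^ 2 := by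
  classical
  set A := (Finset.Icc (L + 1) (L + N)).image (fun n => (Nat.factorial n : ZMod p)) with hA
  have hp : p.Prime := Fact.out
  have hfac : ∀ k : ℕ, k < p → (Nat.factorial k : ZMod p) ≠ 0 := by
    intro k hk h0
    rw [ZMod.natCast_eq_zero_iff] at h0
    have := (Nat.Prime.dvd_factorial hp).mp h0
    omega
  have hcast : ∀ m : ℕ, m < p → ∀ n : ℕ, n < p → (m : ZMod p) = (n : ZMod p) → m = n := by
    intro m hm n hn h
    have := congrArg ZMod.val h
    rwa [ZMod.val_cast_of_lt hm, ZMod.val_cast_of_lt hn] at this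
  set φ : ℕ → ZMod p × ZMod p := fun n =>
    ((Nat.factorial n : ZMod p), if n = L + 1 then (Nat.factorial n : ZMod p)
      else (Nat.factorial (n - 1) : ZMod p)) with hφ
  have hmaps : ∀ n ∈ Finset.Icc (L + 1) (L + N), φ n ∈ A ×ˢ A := by
    intro n hn
    simp only [Finset.mem_Icc] at hn
    simp only [Finset.mem_product, hφ]
    refine ⟨Finset.mem_image_of_mem _ (Finset.mem_Icc.mpr hn), ?_⟩
    by_cases h : n = L + 1
    · simp only [h, if_pos rfl]
      exact Finset.mem_image_of_mem _ (Finset.mem_Icc.mpr (by omega))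
    · simp only [if_neg h]
      exact Finset.mem_image_of_mem _ (Finset.mem_Icc.mpr (by omega))
  have hsplit : ∀ n : ℕ, L + 1 ≤ n →
      (Nat.factorial n : ZMod p) = (n : ZMod p) * (Nat.factorial (n - 1) : ZMod p) := by
    intro n hn
    obtain ⟨k, rfl⟩ : ∃ k, n = k + 1 := ⟨n - 1, by omega⟩
    rw [Nat.factorial_succ]
    push_cast
    ring
  have key : ∀ m ∈ Finset.Icc (L + 1) (L + N), ∀ n ∈ Finset.Icc (L + 1) (L + N),
      φ m = φ n → m = n := by
    intro m hm n hn heq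
    simp only [Finset.mem_Icc] at hm hn
    have h1eq := congrArg Prod.fst heq
    have h2eq := congrArg Prod.snd heq
    simp only [hφ] at h1eq h2eq
    by_cases hmL : m = L + 1 <;> by_cases hnL : n = L + 1
    · omega
    · rw [if_pos hmL, if_neg hnL] at h2eq
      -- m! = n!, m! = (n-1)! hence n! = (n-1)! hence n ≡ 1
      have : (n : ZMod p) * (Nat.factorial (n - 1) : ZMod p)
          = (1 : ℕ) * (Nat.factorial (n - 1) : ZMod p) := by
        rw [← hsplit n hn.1, ← h1eq, h2eq]; push_cast; ring
      have hne : (Nat.factorial (n - 1) : ZMod p) ≠ 0 := hfac _ (by omega)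
      have := hcast n (by omega) 1 (by omega) (mul_right_cancel₀ hne this)
      omega
    · rw [if_neg hmL, if_pos hnL] at h2eq
      have : (m : ZMod p) * (Nat.factorial (m - 1) : ZMod p)
          = (1 : ℕ) * (Nat.factorial (m - 1) : ZMod p) := by
        rw [← hsplit m hm.1, h1eq, ← h2eq]; push_cast; ring
      have hne : (Nat.factorial (m - 1) : ZMod p) ≠ 0 := hfac _ (by omega)
      have := hcast m (by omega) 1 (by omega) (mul_right_cancel₀ hne this)
      omega
    · rw [if_neg hmL, if_neg hnL] at h2eq
      have : (m : ZMod p) * (Nat.factorial (m - 1) : ZMod p)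
          = (n : ZMod p) * (Nat.factorial (m - 1) : ZMod p) := by
        rw [← hsplit m hm.1, h1eq, hsplit n hn.1, h2eq]
      have hne : (Nat.factorial (m - 1) : ZMod p) ≠ 0 := hfac _ (by omega)
      exact hcast m (by omega) n (by omega) (mul_right_cancel₀ hne this)
  calc N = (Finset.Icc (L + 1) (L + N)).card := by rw [Nat.card_Icc]; omega
    _ ≤ (A ×ˢ A).card := Finset.card_le_card_of_injOn φ hmaps key
    _ = A.card ^ 2 := by rw [Finset.card_product, sq]
end

section
/- Let p be a prime, L an integer, and 1 ≤ k < j. The bivariate polynomial f(x,y) = ∏_{i=1}^{j}(x + L + i) − ∏_{i=1}^{k}(y + L + i) over ℤ/pℤ is not divisible by any linear polynomial b₁x + b₂y + c with (b₁, b₂) ≠ (0,0). -/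
open MvPolynomial

lemma prodXC_monic {R : Type*} [CommRing R] (s : Finset ℕ) (c : ℕ → R) :
    (∏ i ∈ s, (Polynomial.X + Polynomial.C (c i))).Monic :=
  Polynomial.monic_prod_of_monic _ _ fun _ _ => Polynomial.monic_X_add_C _

lemma prodXC_natDegree {R : Type*} [CommRing R] [Nontrivial R] (s : Finset ℕ) (c : ℕ → R) :
    (∏ i ∈ s, (Polynomial.X + Polynomial.C (c i))).natDegree = s.card := by
  rw [Polynomial.natDegree_prod_of_monic _ _ fun i _ => Polynomial.monic_X_add_C _]
  simp

lemma prodlin_natDegree_le {R : Type*} [CommRing R] (s : Finset ℕ) (a : R) (c : ℕ → R) :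
    (∏ i ∈ s, (Polynomial.C a * Polynomial.X + Polynomial.C (c i))).natDegree ≤ s.card := by
  have h : ∀ i ∈ s, (Polynomial.C a * Polynomial.X + Polynomial.C (c i)).natDegree ≤ 1 := by
    intro i _
    exact Polynomial.natDegree_linear_le
  refine le_trans (Polynomial.natDegree_prod_le _ _) (le_trans (Finset.sum_le_sum h) ?_)
  simp

theorem bivariate_poly_no_linear_factor (p : ℕ) [Fact p.Prime] (L : ℤ) (j k : ℕ)
    (hk : 1 ≤ k) (hkj : k < j) (hjp : j < p)
    (f : MvPolynomial (Fin 2) (ZMod p))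
    (hf : f = (∏ i ∈ Finset.Icc 1 j, (X 0 + C (L : ZMod p) + C (i : ZMod p)))
            - (∏ i ∈ Finset.Icc 1 k, (X 1 + C (L : ZMod p) + C (i : ZMod p)))) :
    ∀ b₁ b₂ c : ZMod p, (b₁, b₂) ≠ (0, 0) →
      ¬ (C b₁ * X 0 + C b₂ * X 1 + C c ∣ f) := by
  intro b₁ b₂ c hne hdvd
  obtain ⟨q, hq⟩ := hdvd
  have key : ∀ (g : Fin 2 → Polynomial (ZMod p)), aeval g f =
      (∏ i ∈ Finset.Icc 1 j, (g 0 + Polynomial.C ((L : ZMod p) + (i : ZMod p))))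
      - (∏ i ∈ Finset.Icc 1 k, (g 1 + Polynomial.C ((L : ZMod p) + (i : ZMod p)))) := by
    intro g
    rw [hf]
    simp [add_assoc, Polynomial.C_add]
  have keyl : ∀ (g : Fin 2 → Polynomial (ZMod p)),
      aeval g (C b₁ * X 0 + C b₂ * X 1 + C c : MvPolynomial (Fin 2) (ZMod p)) =
      Polynomial.C b₁ * g 0 + Polynomial.C b₂ * g 1 + Polynomial.C c := by
    intro g
    simp
  by_cases hb2 : b₂ = 0
  case pos =>
    have hb1 : b₁ ≠ 0 := fun h => hne (by simp [h, hb2])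
    set g : Fin 2 → Polynomial (ZMod p) := ![Polynomial.C (-c * b₁⁻¹), Polynomial.X] with hg
    have hzero : (aeval g) f = 0 := by
      rw [hq, map_mul, keyl]
      have h1 : b₁ * (-c * b₁⁻¹) + c = 0 := by field_simp; ring
      simp only [hg, Matrix.cons_val_zero, Matrix.cons_val_one, Matrix.head_cons, hb2,
        Polynomial.C_0, zero_mul, add_zero, ← Polynomial.C_mul, ← Polynomial.C_add, h1]
    have hcoef : ((aeval g) f).coeff k = -1 := by
      rw [key]
      have hA : (∏ i ∈ Finset.Icc 1 j,
          (g 0 + Polynomial.C ((L : ZMod p) + (i : ZMod p)))) =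
          Polynomial.C (∏ i ∈ Finset.Icc 1 j, ((-c * b₁⁻¹) + ((L : ZMod p) + i))) := by
        rw [map_prod]
        simp [hg]
      have hB : (∏ i ∈ Finset.Icc 1 k,
          (g 1 + Polynomial.C ((L : ZMod p) + (i : ZMod p)))) =
          ∏ i ∈ Finset.Icc 1 k, (Polynomial.X + Polynomial.C ((L : ZMod p) + i)) := by
        simp [hg]
      rw [hA, hB, Polynomial.coeff_sub, Polynomial.coeff_C, if_neg (by omega)]
      have hm := prodXC_monic (R := ZMod p) (Finset.Icc 1 k) (fun i => (L : ZMod p) + i)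
      have hd := prodXC_natDegree (R := ZMod p) (Finset.Icc 1 k) (fun i => (L : ZMod p) + i)
      rw [Nat.card_Icc] at hd
      have : k + 1 - 1 = k := by omega
      rw [this] at hd
      have hone := hm.coeff_natDegree
      rw [hd] at hone
      rw [hone]
      ring
    rw [hzero] at hcoef
    simp only [Polynomial.coeff_zero] at hcoef
    exact one_ne_zero (neg_eq_zero.mp hcoef.symm)
  case neg =>
    set g : Fin 2 → Polynomial (ZMod p) :=
      ![Polynomial.X, Polynomial.C (-b₁ * b₂⁻¹) * Polynomial.X + Polynomial.C (-c * b₂⁻¹)] with hg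
    have hzero : (aeval g) f = 0 := by
      rw [hq, map_mul, keyl]
      have h1 : b₂ * (-b₁ * b₂⁻¹) + b₁ = 0 := by field_simp; ring
      have h2 : b₂ * (-c * b₂⁻¹) + c = 0 := by field_simp; ring
      simp only [hg, Matrix.cons_val_zero, Matrix.cons_val_one, Matrix.head_cons]
      rw [mul_add, ← mul_assoc, ← Polynomial.C_mul, ← Polynomial.C_mul]
      have : Polynomial.C b₁ * Polynomial.X + (Polynomial.C (b₂ * (-b₁ * b₂⁻¹)) * Polynomial.X
          + Polynomial.C (b₂ * (-c * b₂⁻¹))) + Polynomial.C c =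
          Polynomial.C (b₂ * (-b₁ * b₂⁻¹) + b₁) * Polynomial.X
          + Polynomial.C (b₂ * (-c * b₂⁻¹) + c) := by
        rw [Polynomial.C_add, Polynomial.C_add]; ring
      rw [this, h1, h2]
      simp
    have hcoef : ((aeval g) f).coeff j = 1 := by
      rw [key]
      have hA : (∏ i ∈ Finset.Icc 1 j,
          (g 0 + Polynomial.C ((L : ZMod p) + (i : ZMod p)))) =
          ∏ i ∈ Finset.Icc 1 j, (Polynomial.X + Polynomial.C ((L : ZMod p) + i)) := by
        simp [hg]
      have hB : (∏ i ∈ Finset.Icc 1 k,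
          (g 1 + Polynomial.C ((L : ZMod p) + (i : ZMod p)))) =
          ∏ i ∈ Finset.Icc 1 k, (Polynomial.C (-b₁ * b₂⁻¹) * Polynomial.X
            + Polynomial.C ((-c * b₂⁻¹) + ((L : ZMod p) + i))) := by
        simp [hg, add_assoc, Polynomial.C_add]
      rw [hA, hB, Polynomial.coeff_sub]
      have hm := prodXC_monic (R := ZMod p) (Finset.Icc 1 j) (fun i => (L : ZMod p) + i)
      have hd := prodXC_natDegree (R := ZMod p) (Finset.Icc 1 j) (fun i => (L : ZMod p) + i)
      rw [Nat.card_Icc] at hd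
      have hj1 : j + 1 - 1 = j := by omega
      rw [hj1] at hd
      have hble := prodlin_natDegree_le (R := ZMod p) (Finset.Icc 1 k) (-b₁ * b₂⁻¹)
        (fun i => (-c * b₂⁻¹) + ((L : ZMod p) + i))
      rw [Nat.card_Icc] at hble
      have hBz : (∏ i ∈ Finset.Icc 1 k, (Polynomial.C (-b₁ * b₂⁻¹) * Polynomial.X
          + Polynomial.C ((-c * b₂⁻¹) + ((L : ZMod p) + i)))).coeff j = 0 := by
        apply Polynomial.coeff_eq_zero_of_natDegree_lt
        omega
      have hone := hm.coeff_natDegree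
      rw [hd] at hone
      rw [hBz, hone]
      ring
    rw [hzero] at hcoef
    simp only [Polynomial.coeff_zero] at hcoef
    exact one_ne_zero hcoef.symm
end

section
/- Let p be a prime and N an integer with 1 ≤ N < p^{1/2}, and let A = {n! mod p : 1 ≤ n ≤ N}. Then |A·A|⁴ ≥ #{(n,m) : 1 ≤ n,m ≤ N, gcd(n,m)=1}; consequently |A·A| ≫ N as N → ∞ (with N < √p). -/
open Finset Pointwise

-- Injection lemma: coprime pairs inject into (A*A) × (A*A)
lemma key_lemma (p N : ℕ) (hp : p.Prime) (hN : 1 ≤ N) (hN2 : N ^ 2 < p)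
    (A : Finset (ZMod p))
    (hA : A = (Finset.Icc 1 N).image (fun n => (Nat.factorial n : ZMod p))) :
    ((Finset.Icc 1 N ×ˢ Finset.Icc 1 N).filter
        (fun q => Nat.gcd q.1 q.2 = 1)).card ≤ ((A * A).card) ^ 2 := by
  haveI : Fact p.Prime := ⟨hp⟩
  have hNp : N < p := lt_of_le_of_lt (by nlinarith [hN]) hN2
  -- membership facts
  have mem1 : ∀ n, 1 ≤ n → n ≤ N → (Nat.factorial n : ZMod p) ∈ A := by
    intro n h1 h2
    rw [hA]
    exact Finset.mem_image.2 ⟨n, Finset.mem_Icc.2 ⟨h1, h2⟩, rfl⟩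
  have mem0 : ∀ n, 1 ≤ n → n ≤ N → (Nat.factorial (n - 1) : ZMod p) ∈ A := by
    intro n h1 h2
    rcases Nat.lt_or_ge n 2 with h | h
    · interval_cases n
      simpa using mem1 1 le_rfl hN
    · exact mem1 (n - 1) (by omega) (by omega)
  have fact_ne : ∀ n, n ≤ N → (Nat.factorial n : ZMod p) ≠ 0 := by
    intro n hn h0
    rw [ZMod.natCast_eq_zero_iff] at h0
    have := (Nat.Prime.dvd_factorial hp).1 h0
    omega
  rw [sq, ← Finset.card_product]
  apply Finset.card_le_card_of_injOn
    (fun q => ((Nat.factorial q.1 * Nat.factorial (q.2 - 1) : ZMod p),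
               (Nat.factorial (q.1 - 1) * Nat.factorial q.2 : ZMod p)))
  · intro q hq
    rw [Finset.mem_coe, Finset.mem_filter, Finset.mem_product, Finset.mem_Icc, Finset.mem_Icc] at hq
    obtain ⟨⟨⟨h11, h12⟩, h21, h22⟩, _⟩ := hq
    exact Finset.mem_product.2 ⟨Finset.mul_mem_mul (mem1 _ h11 h12) (mem0 _ h21 h22),
      Finset.mul_mem_mul (mem0 _ h11 h12) (mem1 _ h21 h22)⟩
  · rintro ⟨n, m⟩ hq ⟨n', m'⟩ hq' heq
    rw [Finset.mem_coe, Finset.mem_filter, Finset.mem_product, Finset.mem_Icc,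
      Finset.mem_Icc] at hq hq'
    obtain ⟨⟨⟨hn1, hn2⟩, hm1, hm2⟩, hco⟩ := hq
    obtain ⟨⟨⟨hn1', hn2'⟩, hm1', hm2'⟩, hco'⟩ := hq'
    simp only [Prod.mk.injEq] at heq
    obtain ⟨e1, e2⟩ := heq
    -- rewrite using k * (k-1)! = k!
    have hfm : (m : ZMod p) * (Nat.factorial (m - 1) : ZMod p) = (Nat.factorial m : ZMod p) := by
      rw [← Nat.cast_mul, Nat.mul_factorial_pred (by omega)]
    have hfm' : (m' : ZMod p) * (Nat.factorial (m' - 1) : ZMod p) = (Nat.factorial m' : ZMod p) := by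
      rw [← Nat.cast_mul, Nat.mul_factorial_pred (by omega)]
    have hfn : (n : ZMod p) * (Nat.factorial (n - 1) : ZMod p) = (Nat.factorial n : ZMod p) := by
      rw [← Nat.cast_mul, Nat.mul_factorial_pred (by omega)]
    have hfn' : (n' : ZMod p) * (Nat.factorial (n' - 1) : ZMod p) = (Nat.factorial n' : ZMod p) := by
      rw [← Nat.cast_mul, Nat.mul_factorial_pred (by omega)]
    set X := (Nat.factorial n : ZMod p) * (Nat.factorial m : ZMod p) with hX
    set Y := (Nat.factorial n' : ZMod p) * (Nat.factorial m' : ZMod p) with hY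
    have h1 : X * (m' : ZMod p) = Y * (m : ZMod p) := by
      have := congrArg (fun z => z * ((m : ZMod p) * (m' : ZMod p))) e1
      calc X * (m' : ZMod p)
          = (Nat.factorial n : ZMod p) * (Nat.factorial (m-1) : ZMod p) *
            ((m : ZMod p) * (m' : ZMod p)) := by rw [hX, ← hfm]; ring
        _ = (Nat.factorial n' : ZMod p) * (Nat.factorial (m'-1) : ZMod p) *
            ((m : ZMod p) * (m' : ZMod p)) := this
        _ = Y * (m : ZMod p) := by rw [hY, ← hfm']; ring
    have h2 : X * (n' : ZMod p) = Y * (n : ZMod p) := by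
      have := congrArg (fun z => z * ((n : ZMod p) * (n' : ZMod p))) e2
      calc X * (n' : ZMod p)
          = (Nat.factorial (n-1) : ZMod p) * (Nat.factorial m : ZMod p) *
            ((n : ZMod p) * (n' : ZMod p)) := by rw [hX, ← hfn]; ring
        _ = (Nat.factorial (n'-1) : ZMod p) * (Nat.factorial m' : ZMod p) *
            ((n : ZMod p) * (n' : ZMod p)) := this
        _ = Y * (n : ZMod p) := by rw [hY, ← hfn']; ring
    have hXne : X ≠ 0 := mul_ne_zero (fact_ne n hn2) (fact_ne m hm2)
    have hmain : (n : ZMod p) * (m' : ZMod p) = (n' : ZMod p) * (m : ZMod p) := by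
      apply mul_left_cancel₀ hXne
      calc X * ((n : ZMod p) * (m' : ZMod p)) = (X * (m' : ZMod p)) * (n : ZMod p) := by ring
        _ = (Y * (m : ZMod p)) * (n : ZMod p) := by rw [h1]
        _ = (Y * (n : ZMod p)) * (m : ZMod p) := by ring
        _ = (X * (n' : ZMod p)) * (m : ZMod p) := by rw [h2]
        _ = X * ((n' : ZMod p) * (m : ZMod p)) := by ring
    have hnat : n * m' = n' * m := by
      have hc : ((n * m' : ℕ) : ZMod p) = ((n' * m : ℕ) : ZMod p) := by
        push_cast; exact hmain
      have hlt1 : n * m' < p := lt_of_le_of_lt (by nlinarith) hN2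
      have hlt2 : n' * m < p := lt_of_le_of_lt (by nlinarith) hN2
      have := congrArg ZMod.val hc
      rwa [ZMod.val_cast_of_lt hlt1, ZMod.val_cast_of_lt hlt2] at this
    have hnn' : n = n' := by
      have d1 : n ∣ n' := (Nat.Coprime.dvd_of_dvd_mul_right hco
        (hnat ▸ Dvd.intro m' rfl))
      have d2 : n' ∣ n := Nat.Coprime.dvd_of_dvd_mul_right hco'
        (hnat ▸ Dvd.intro m rfl)
      exact Nat.dvd_antisymm d1 d2
    have hmm' : m = m' := by
      subst hnn'
      have := hnat
      exact (Nat.eq_of_mul_eq_mul_left (by omega) this.symm)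
    simp [hnn', hmm']

-- Counting lemma: at least N²/12 coprime pairs
lemma count_lemma (N : ℕ) (hN : 1 ≤ N) :
    (N : ℝ) ^ 2 ≤ 12 * (((Finset.Icc 1 N ×ˢ Finset.Icc 1 N).filter
        (fun q => Nat.gcd q.1 q.2 = 1)).card : ℝ) := by
  classical
  set P := Finset.Icc 1 N ×ˢ Finset.Icc 1 N with hP
  set S := P.filter (fun q => Nat.gcd q.1 q.2 = 1) with hS
  set T := P.filter (fun q => ¬ Nat.gcd q.1 q.2 = 1) with hT
  have hsplit : S.card + T.card = N ^ 2 := by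
    rw [hS, hT, Finset.card_filter_add_card_filter_not]
    simp [hP, Nat.Icc_eq_range', sq]
  -- T is covered by biUnion over d in Icc 2 N
  have hsub : T ⊆ (Finset.Icc 2 N).biUnion (fun d =>
      ((Finset.Icc 1 N).filter (d ∣ ·)) ×ˢ ((Finset.Icc 1 N).filter (d ∣ ·))) := by
    intro q hq
    rw [hT, Finset.mem_filter, hP, Finset.mem_product, Finset.mem_Icc, Finset.mem_Icc] at hq
    obtain ⟨⟨⟨h11, h12⟩, h21, h22⟩, hg⟩ := hq
    set d := Nat.gcd q.1 q.2 with hd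
    have hd1 : d ∣ q.1 := Nat.gcd_dvd_left _ _
    have hd2 : d ∣ q.2 := Nat.gcd_dvd_right _ _
    have hdpos : 1 ≤ d := Nat.pos_of_ne_zero (fun h0 => by
      have h0' : Nat.gcd q.1 q.2 = 0 := by rw [← hd]; exact h0
      have := Nat.eq_zero_of_gcd_eq_zero_left h0'; omega)
    have hdN : d ≤ N := le_trans (Nat.le_of_dvd (by omega) hd1) h12
    refine Finset.mem_biUnion.2 ⟨d, Finset.mem_Icc.2 ⟨by omega, hdN⟩, ?_⟩
    exact Finset.mem_product.2 ⟨Finset.mem_filter.2 ⟨Finset.mem_Icc.2 ⟨h11, h12⟩, hd1⟩,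
      Finset.mem_filter.2 ⟨Finset.mem_Icc.2 ⟨h21, h22⟩, hd2⟩⟩
  have hcard_div : ∀ d : ℕ, ((Finset.Icc 1 N).filter (d ∣ ·)).card = N / d := by
    intro d
    have : Finset.Icc 1 N = Finset.Ioc 0 N := by
      ext x; simp [Nat.lt_iff_add_one_le]
    rw [this, Nat.Ioc_filter_dvd_card_eq_div]
  have hTle : T.card ≤ ∑ d ∈ Finset.Icc 2 N, (N / d) ^ 2 := by
    calc T.card ≤ _ := Finset.card_le_card hsub
      _ ≤ ∑ d ∈ Finset.Icc 2 N, (((Finset.Icc 1 N).filter (d ∣ ·)) ×ˢ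
            ((Finset.Icc 1 N).filter (d ∣ ·))).card := Finset.card_biUnion_le
      _ = ∑ d ∈ Finset.Icc 2 N, (N / d) ^ 2 := by
          apply Finset.sum_congr rfl
          intro d _
          rw [Finset.card_product, hcard_div, sq]
  -- real bound on the sum
  have hsum : ((∑ d ∈ Finset.Icc 2 N, (N / d) ^ 2 : ℕ) : ℝ) ≤ 11 / 12 * (N : ℝ) ^ 2 := by
    push_cast
    have step1 : ∀ d ∈ Finset.Icc 2 N, ((N / d : ℕ) : ℝ) ^ 2 ≤ (N : ℝ) ^ 2 * ((d : ℝ) ^ 2)⁻¹ := by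
      intro d hd
      rw [Finset.mem_Icc] at hd
      have hdpos : (0 : ℝ) < d := by exact_mod_cast (by omega : 0 < d)
      have h1 : ((N / d : ℕ) : ℝ) ≤ (N : ℝ) / d := Nat.cast_div_le
      have h2 : (0 : ℝ) ≤ ((N / d : ℕ) : ℝ) := Nat.cast_nonneg _
      calc ((N / d : ℕ) : ℝ) ^ 2 ≤ ((N : ℝ) / d) ^ 2 := by nlinarith
        _ = (N : ℝ) ^ 2 * ((d : ℝ) ^ 2)⁻¹ := by field_simp
    calc ∑ d ∈ Finset.Icc 2 N, ((N / d : ℕ) : ℝ) ^ 2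
        ≤ ∑ d ∈ Finset.Icc 2 N, (N : ℝ) ^ 2 * ((d : ℝ) ^ 2)⁻¹ := Finset.sum_le_sum step1
      _ ≤ ∑ d ∈ insert 2 (Finset.Ioo 2 (N + 1)), (N : ℝ) ^ 2 * ((d : ℝ) ^ 2)⁻¹ := by
          apply Finset.sum_le_sum_of_subset_of_nonneg
          · intro x hx
            rw [Finset.mem_Icc] at hx
            rcases Nat.eq_or_lt_of_le hx.1 with h | h
            · exact Finset.mem_insert.2 (Or.inl h.symm)
            · exact Finset.mem_insert.2 (Or.inr (Finset.mem_Ioo.2 ⟨h, by omega⟩))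
          · intro i _ _
            exact mul_nonneg (by positivity) (inv_nonneg.2 (sq_nonneg _))
      _ = (N : ℝ) ^ 2 * ((2 : ℝ) ^ 2)⁻¹ +
            ∑ d ∈ Finset.Ioo 2 (N + 1), (N : ℝ) ^ 2 * ((d : ℝ) ^ 2)⁻¹ := by
          rw [Finset.sum_insert (by simp)]
          norm_num
      _ ≤ (N : ℝ) ^ 2 * (1 / 4) + (N : ℝ) ^ 2 * (2 / 3) := by
          rw [← Finset.mul_sum]
          have := sum_Ioo_inv_sq_le (α := ℝ) 2 (N + 1)
          have hle : ∑ d ∈ Finset.Ioo 2 (N + 1), ((d : ℝ) ^ 2)⁻¹ ≤ 2 / 3 := by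
            exact this.trans (by norm_num)
          gcongr
          norm_num
      _ = 11 / 12 * (N : ℝ) ^ 2 := by ring
  have hScard : ((N : ℝ) ^ 2) ≤ (S.card : ℝ) + 11 / 12 * (N : ℝ) ^ 2 := by
    have : ((S.card : ℝ) + (T.card : ℝ)) = (N : ℝ) ^ 2 := by
      rw [← Nat.cast_add, hsplit]; push_cast; ring
    have hT : (T.card : ℝ) ≤ 11 / 12 * (N : ℝ) ^ 2 :=
      le_trans (by exact_mod_cast Nat.cast_le.2 hTle) hsum
    linarith
  rw [hS] at hScard ⊢
  linarith

theorem product_set_card_lower_bound :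
    (∀ (p N : ℕ), p.Prime → 1 ≤ N → N ^ 2 < p →
      ∀ A : Finset (ZMod p),
        A = (Finset.Icc 1 N).image (fun n => (Nat.factorial n : ZMod p)) →
        ((Finset.Icc 1 N ×ˢ Finset.Icc 1 N).filter
            (fun q => Nat.gcd q.1 q.2 = 1)).card ≤ ((A * A).card) ^ 4) ∧
    ∃ c : ℝ, 0 < c ∧ ∃ N₀ : ℕ, ∀ (p N : ℕ), p.Prime → N₀ ≤ N → N ^ 2 < p →
      ∀ A : Finset (ZMod p),
        A = (Finset.Icc 1 N).image (fun n => (Nat.factorial n : ZMod p)) →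
        c * (N : ℝ) ≤ ((A * A).card : ℝ) := by
  constructor
  · intro p N hp hN hN2 A hA
    calc _ ≤ ((A * A).card) ^ 2 := key_lemma p N hp hN hN2 A hA
      _ ≤ ((A * A).card) ^ 4 := by
          rcases Nat.eq_zero_or_pos (A * A).card with h | h
          · simp [h]
          · exact Nat.pow_le_pow_right h (by norm_num)
  · refine ⟨1 / 4, by norm_num, 1, fun p N hp hN hN2 A hA => ?_⟩
    have hkey := key_lemma p N hp hN hN2 A hA
    have hcount := count_lemma N hN
    set K := ((A * A).card : ℝ) with hK
    have hKnn : (0 : ℝ) ≤ K := Nat.cast_nonneg _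
    have h1 : (N : ℝ) ^ 2 ≤ 12 * K ^ 2 := by
      have : (((Finset.Icc 1 N ×ˢ Finset.Icc 1 N).filter
          (fun q => Nat.gcd q.1 q.2 = 1)).card : ℝ) ≤ K ^ 2 := by
        rw [hK]; exact_mod_cast hkey
      linarith
    have hNnn : (0 : ℝ) ≤ (N : ℝ) := Nat.cast_nonneg _
    nlinarith
end

section
/- Let p be a prime, L, N integers with 0 < L+1 < L+N < p, and A = A(L,N) = {n! mod p : L+1 ≤ n ≤ L+N}. For every integer j with 1 ≤ j ≤ N−1, the set X_j = {∏_{i=1}^{j}(x + L + i) mod p : 1 ≤ x ≤ N − j} is contained in the ratio set A/A. -/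
open Finset Pointwise

lemma fact_mul_prod (n j : ℕ) :
    n.factorial * ∏ i ∈ Finset.Icc 1 j, (n + i) = (n + j).factorial := by
  induction j with
  | zero => simp
  | succ j ih =>
    rw [Finset.prod_Icc_succ_top (by omega : 1 ≤ j + 1), ← mul_assoc, ih,
      ← Nat.add_assoc, Nat.factorial_succ, Nat.mul_comm]

theorem Xj_subset_ratio_set (p : ℕ) [Fact p.Prime] (L N : ℕ)
    (h1 : L + 1 < L + N) (h2 : L + N < p)
    (A : Finset (ZMod p))
    (hA : A = (Finset.Icc (L + 1) (L + N)).image (fun n => (Nat.factorial n : ZMod p)))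
    (j : ℕ) (hj1 : 1 ≤ j) (hj2 : j ≤ N - 1) :
    (Finset.Icc 1 (N - j)).image
        (fun x : ℕ => ∏ i ∈ Finset.Icc 1 j, ((x + L + i : ℕ) : ZMod p))
      ⊆ A / A := by
  intro a ha
  simp only [Finset.mem_image, Finset.mem_Icc] at ha
  obtain ⟨x, ⟨hx1, hx2⟩, rfl⟩ := ha
  have hp := (Fact.out : p.Prime)
  rw [Finset.mem_div]
  refine ⟨((x + L + j).factorial : ZMod p), ?_, ((x + L).factorial : ZMod p), ?_, ?_⟩
  · rw [hA]; exact Finset.mem_image_of_mem _ (Finset.mem_Icc.mpr ⟨by omega, by omega⟩)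
  · rw [hA]; exact Finset.mem_image_of_mem _ (Finset.mem_Icc.mpr ⟨by omega, by omega⟩)
  · have hne : ((x + L).factorial : ZMod p) ≠ 0 := by
      rw [Ne, ZMod.natCast_eq_zero_iff]
      intro hdvd
      have := (Nat.Prime.dvd_factorial hp).mp hdvd
      omega
    rw [div_eq_iff hne]
    push_cast [← fact_mul_prod (x + L) j]
    ring
end
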